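/- Let n ≥ 2, let r ≡ 2 (mod 4), r ≥ 2, and let π ∈ A_{r,n}. Then ℓ_𝒜(π) = ℓ_F(π) + ℓ_G(p(π)), where ℓ_𝒜 is word length in A_{r,n} with respect to 𝒜, ℓ_F(π) = ℓ_𝒜(π) − ℓ_𝒜(s(p(π))) is the fibral length, and ℓ_G is word length in G_{r/2,n} with respect to its Coxeter-like generators {s_0, …, s_{n−1}}. -/

import Mathlib

open Multiplicative

namespace ACP

/-- The action of `Sₙ` on color vectors by permuting coordinates. -/
def permAct (r n : ℕ) : Equiv.Perm (Fin n) →* MulAut (Fin n → Multiplicative (ZMod r)) where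
  toFun τ :=
    { toFun := fun z => z ∘ τ.symm
      invFun := fun z => z ∘ τ
      left_inv := fun z => by ext i; simp
      right_inv := fun z => by ext i; simp
      map_mul' := fun z w => rfl }
  map_one' := by ext z i; rfl
  map_mul' a b := by ext z i; rfl

/-- The group of colored permutations `G_{r,n} = ℤ_r ≀ Sₙ`. -/
abbrev G (r n : ℕ) : Type := (Fin n → Multiplicative (ZMod r)) ⋊[permAct r n] Equiv.Perm (Fin n)

/-- The Coxeter-like generators: `gen r n 0 = s₀` colors the digit 1 by one color,
`gen r n i = sᵢ` (for `1 ≤ i ≤ n-1`) is the adjacent transposition `(i, i+1)`. -/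
def gen (r n : ℕ) (i : ℕ) : G r n :=
  if h : 0 < i ∧ i < n then
    ⟨1, Equiv.swap ⟨i - 1, by omega⟩ ⟨i, h.2⟩⟩
  else
    ⟨fun j => if (j : ℕ) = 0 then ofAdd (1 : ZMod r) else 1, 1⟩

def zmod2ToUnits : Multiplicative (ZMod 2) →* ℤˣ where
  toFun z := (-1) ^ (toAdd z).val
  map_one' := rfl
  map_mul' := by decide

def csumHom (r n : ℕ) (hr : 2 ∣ r) :
    (Fin n → Multiplicative (ZMod r)) →* Multiplicative (ZMod 2) where
  toFun z := ofAdd (∑ i, ZMod.castHom hr (ZMod 2) (toAdd (z i)))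
  map_one' := by simp
  map_mul' z w := by
    have h : ∀ i, ZMod.castHom hr (ZMod 2) (toAdd ((z * w) i))
        = ZMod.castHom hr (ZMod 2) (toAdd (z i)) + ZMod.castHom hr (ZMod 2) (toAdd (w i)) :=
      fun i => map_add _ _ _
    simp only [h, Finset.sum_add_distrib, ofAdd_add]

/-- The sign character of `G_{r,n}` (for even `r`): sends every Coxeter-like
generator `sᵢ` to `-1`. -/
noncomputable def sgn (r n : ℕ) (hr : 2 ∣ r) : G r n →* ℤˣ :=
  SemidirectProduct.lift (zmod2ToUnits.comp (csumHom r n hr)) Equiv.Perm.sign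
    (by
      intro g
      refine MonoidHom.ext fun z => ?_
      have h1 : ∀ a x : ℤˣ, a * x * a⁻¹ = x := fun a x => by
        rw [mul_comm a x, mul_inv_cancel_right]
      simp only [MonoidHom.comp_apply, MulEquiv.coe_toMonoidHom, MulAut.conj_apply, h1]
      congr 1
      show csumHom r n hr (z ∘ g.symm) = csumHom r n hr z
      unfold csumHom
      simp only [MonoidHom.coe_mk, OneHom.coe_mk]
      congr 1
      exact Equiv.sum_comp g.symm fun j => ZMod.castHom hr (ZMod 2) (toAdd (z j)))

/-- The group of alternating colored permutations `A_{r,n}`: the kernel of the sign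
character of `G_{r,n}`. -/
noncomputable def Arn (r n : ℕ) (hr : 2 ∣ r) : Subgroup (G r n) := (sgn r n hr).ker

/-- The generators of `A_{r,n}`: `agen r n 0 = a₀ = s₀²` and
`agen r n i = aᵢ = s₀^{r/2} sᵢ` for `i ≥ 1`. -/
def agen (r n : ℕ) (i : ℕ) : G r n :=
  if i = 0 then gen r n 0 ^ 2 else gen r n 0 ^ (r / 2) * gen r n i

/-- The generating set `𝒜 = {a₀, a₁, a₁⁻¹, a₂, …, a_{n-1}}` of `A_{r,n}`. -/
def Aset (r n : ℕ) : Set (G r n) :=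
  {x | ∃ i ≤ n - 1, x = agen r n i} ∪ {(agen r n 1)⁻¹}

/-- The Coxeter-like generating set `{s₀, …, s_{n-1}}` of `G_{r,n}`. -/
def Sset (r n : ℕ) : Set (G r n) := {x | ∃ i < n, x = gen r n i}

/-- Word length of `g` with respect to a generating set `B`. -/
noncomputable def wordLength {H : Type*} [Group H] (B : Set H) (g : H) : ℕ :=
  sInf {k | ∃ w : List H, (∀ x ∈ w, x ∈ B) ∧ w.prod = g ∧ w.length = k}

/-- The element `a₁² ∈ A_{r,n}`. -/
noncomputable def a1sq (r n : ℕ) (hr : 2 ∣ r) : ↥(Arn r n hr) :=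
  ⟨agen r n 1 ^ 2, by rw [Arn, MonoidHom.mem_ker, map_pow]; exact Int.units_sq _⟩

/-- The operator `a ⊘ 2` : the residue mod `r/2` of `a/2` (`a` even) or of
`(a + r/2)/2` (`a` odd). -/
def oslash (r a : ℕ) : ℕ :=
  if a % 2 = 0 then (a / 2) % (r / 2) else ((a + r / 2) / 2) % (r / 2)

/-- `z_i(π)`, the color of digit `i+1` of `π`, as a natural number in `{0, …, r-1}`. -/
def zval (r n : ℕ) (π : G r n) (i : Fin n) : ℕ := (toAdd (π.left i)).val

/-- `csum(π) = Σ z_i(π)`. -/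
def csum (r n : ℕ) (π : G r n) : ℕ := ∑ i, zval r n π i

/-- Rank of the colored letter `b^{[c]}` (with `1 ≤ b ≤ n`, `0 ≤ c ≤ r-1`) in the
length order `n^{[r-1]} < ⋯ < 1^{[1]} < 1 < 2 < ⋯ < n`. -/
def rank (r n : ℕ) (b c : ℕ) : ℕ :=
  if c = 0 then n * (r - 1) + (b - 1) else (n - b) * (r - 1) + (r - 1 - c)

/-- Rank (in the length order) of the letter in position `i` of the window of `π`. -/
def colRank (r n : ℕ) (π : G r n) (i : Fin n) : ℕ :=
  rank r n ((π.right i : ℕ) + 1) (zval r n π (π.right i))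

/-- The inversion number of `π ∈ G_{r,n}` with respect to the length order. -/
noncomputable def inv (r n : ℕ) (π : G r n) : ℕ :=
  Nat.card {p : Fin n × Fin n // p.1 < p.2 ∧ colRank r n π p.2 < colRank r n π p.1}

/-- The ordinary inversion number of a permutation. -/
noncomputable def invPerm (n : ℕ) (τ : Equiv.Perm (Fin n)) : ℕ :=
  Nat.card {p : Fin n × Fin n // p.1 < p.2 ∧ τ p.2 < τ p.1}

/-- The covering map `p : A_{r,n} → G_{r/2,n}`, `p(z, τ) = ((zᵢ ⊘ 2)ᵢ, τ)`. -/
def pmap (r n : ℕ) (π : G r n) : G (r / 2) n :=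
  ⟨fun i => ofAdd ((oslash r (zval r n π i) : ZMod (r / 2))), π.right⟩

/-- The section `s : G_{r/2,n} → A_{r,n}`: doubles all colors (mod `r`), adding `r/2`
to the color of the digit `1` when `inv(|π|)` is odd. -/
noncomputable def smap (r n : ℕ) (π : G (r / 2) n) : G r n :=
  ⟨fun d => ofAdd
      (((2 * zval (r / 2) n π d +
        if (d : ℕ) = 0 ∧ invPerm n π.right % 2 = 1 then r / 2 else 0 : ℕ) : ZMod r)),
   π.right⟩

/-- `c(π) = Σ_{i : z_i(π) ≠ 0} (i - 1)` (digits are `1`-based). -/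
def cstat (r n : ℕ) (π : G r n) : ℕ :=
  ∑ i : Fin n, if zval r n π i ≠ 0 then (i : ℕ) else 0

/-- The number of absolute transparent inversions of `π`. -/
noncomputable def tinv (r n : ℕ) (π : G r n) : ℕ :=
  Nat.card {p : Fin n × Fin n //
    zval r n π p.1 = r / 2 ∧ p.2 < p.1 ∧ π.right⁻¹ p.1 < π.right⁻¹ p.2}

/-- The (digit-indexed) Lehmer code `l_i = #{j : j > i, τ⁻¹(i) > τ⁻¹(j)}`. -/
noncomputable def lehmer (n : ℕ) (τ : Equiv.Perm (Fin n)) (i : Fin n) : ℕ :=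
  Nat.card {j : Fin n // i < j ∧ τ⁻¹ j < τ⁻¹ i}


/-- `μ(π)`: the minimum of `β(ω) + n(ω)` over all factorizations
`ω = b₀ s₀^{i₁} b₁ ⋯ s₀^{i_{k+1}} b_{k+1}` of `π`, where each `b_u` is a word in
`s₁, …, s_{n-1}` only, `n(ω)` is the number of letters `sᵢ` with `i ≠ 0`, and
`β(ω) = Σ_u (i_u ⊘ 2)`. -/
noncomputable def mu (r n : ℕ) (π : G r n) : ℕ :=
  sInf {m | ∃ (b₀ : List ℕ) (L : List (ℕ × List ℕ)),
    (∀ x ∈ b₀, 1 ≤ x ∧ x ≤ n - 1) ∧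
    (∀ q ∈ L, ∀ x ∈ q.2, 1 ≤ x ∧ x ≤ n - 1) ∧
    π = (b₀.map (gen r n)).prod *
        (L.map (fun q => gen r n 0 ^ q.1 * (q.2.map (gen r n)).prod)).prod ∧
    m = (L.map (fun q => oslash r q.1)).sum +
        (b₀.length + (L.map (fun q => q.2.length)).sum)}

/-- The flag-inversion number on `A_{r,n}`:
`finv_A(π) = (r/2)·inv(|π|) + Σᵢ (cᵢ(π) ⊘ 2)` where `cᵢ(π) = r - zᵢ(π⁻¹) (mod r)`. -/
noncomputable def finvA (r n : ℕ) (π : G r n) : ℕ :=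
  (r / 2) * invPerm n π.right + ∑ i, oslash r ((r - zval r n π⁻¹ i) % r)

/-- The number of (colored) right-to-left minima of `π` whose color is not in `{0, r/2}`. -/
noncomputable def rtlMinA (r n : ℕ) (π : G r n) : ℕ :=
  Nat.card {i : Fin n // (∀ j : Fin n, i < j → π.right i < π.right j) ∧
    zval r n π (π.right i) ≠ 0 ∧ zval r n π (π.right i) ≠ r / 2}

/-- The defining relators of the Coxeter-like presentation of `A_{r,n}` on generators
`x₀, …, x_{n-1}`. -/
def rels (r n : ℕ) : Set (FreeGroup (Fin n)) :=
  {w | ∃ i : Fin n, (i : ℕ) = 0 ∧ w = FreeGroup.of i ^ (r / 2)} ∪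
  {w | ∃ i : Fin n, (i : ℕ) = 1 ∧ w = FreeGroup.of i ^ 4} ∪
  {w | ∃ i : Fin n, 2 ≤ (i : ℕ) ∧ w = FreeGroup.of i ^ 2} ∪
  {w | ∃ i j : Fin n, (i : ℕ) ≠ 1 ∧ (j : ℕ) ≠ 1 ∧ (i : ℕ) + 1 < (j : ℕ) ∧
    w = FreeGroup.of i * FreeGroup.of j * (FreeGroup.of i)⁻¹ * (FreeGroup.of j)⁻¹} ∪
  {w | ∃ i j : Fin n, 1 ≤ (i : ℕ) ∧ (j : ℕ) = (i : ℕ) + 1 ∧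
    w = (FreeGroup.of i * FreeGroup.of j) ^ 3} ∪
  {w | ∃ i j : Fin n, (i : ℕ) = 0 ∧ (j : ℕ) = 1 ∧
    w = (FreeGroup.of i * FreeGroup.of j) ^ (2 * r)} ∪
  {w | ∃ i j : Fin n, (i : ℕ) = 0 ∧ (j : ℕ) = 1 ∧
    w = (FreeGroup.of i * (FreeGroup.of j)⁻¹) ^ (2 * r)} ∪
  {w | ∃ i j : Fin n, (i : ℕ) = 0 ∧ (j : ℕ) = 1 ∧
    w = FreeGroup.of i * FreeGroup.of j ^ 2 * (FreeGroup.of i)⁻¹ * (FreeGroup.of j ^ 2)⁻¹} ∪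
  {w | ∃ i j : Fin n, (i : ℕ) = 1 ∧ 2 < (j : ℕ) ∧
    w = FreeGroup.of i * FreeGroup.of j * FreeGroup.of i * (FreeGroup.of j)⁻¹}

/-! ### Auxiliary lemmas for the proof -/

section Aux

variable {r n : ℕ}

theorem mul_left' (x y : G r n) (i : Fin n) :
    (x * y).left i = x.left i * y.left (x.right.symm i) := rfl

theorem mul_right' (x y : G r n) : (x * y).right = x.right * y.right := rfl

theorem mul2_inj (hr : r % 4 = 2) {x y : ZMod (r / 2)} (h : 2 * x = 2 * y) : x = y := by
  have hu : IsUnit (2 : ZMod (r / 2)) := by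
    have h2 : ((2 : ℕ) : ZMod (r / 2)) = (2 : ZMod (r / 2)) := by push_cast; ring
    rw [← h2, ZMod.isUnit_iff_coprime]
    exact Nat.coprime_two_left.mpr ⟨r / 4, by omega⟩
  exact hu.mul_left_cancel h

theorem cast_two_oslash (hr : r % 4 = 2) (a : ℕ) :
    ((2 * oslash r a : ℕ) : ZMod (r / 2)) = (a : ZMod (r / 2)) := by
  rw [ZMod.natCast_eq_natCast_iff']
  unfold oslash
  by_cases h : a % 2 = 0
  · simp only [h, if_true]
    conv_rhs => rw [show a = 2 * (a / 2) by omega]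
    rw [Nat.mul_mod, Nat.mod_mod_of_dvd _ dvd_rfl, ← Nat.mul_mod]
  · simp only [h, if_false]
    calc (2 * ((a + r / 2) / 2 % (r / 2))) % (r / 2)
        = (2 * ((a + r / 2) / 2)) % (r / 2) := by
          rw [Nat.mul_mod, Nat.mod_mod_of_dvd _ dvd_rfl, ← Nat.mul_mod]
      _ = (a + r / 2) % (r / 2) := by rw [show 2 * ((a + r / 2) / 2) = a + r / 2 by omega]
      _ = a % (r / 2) := Nat.add_mod_right a (r / 2)

theorem cast_oslash_mod (hr : r % 4 = 2) (a : ℕ) :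
    ((oslash r (a % r) : ℕ) : ZMod (r / 2)) = ((oslash r a : ℕ) : ZMod (r / 2)) := by
  apply mul2_inj hr
  have e : ∀ b : ℕ, (2 : ZMod (r / 2)) * ((oslash r b : ℕ) : ZMod (r / 2))
      = ((2 * oslash r b : ℕ) : ZMod (r / 2)) := by intro b; push_cast; ring
  rw [e, e, cast_two_oslash hr, cast_two_oslash hr, ZMod.natCast_eq_natCast_iff]
  exact (Nat.mod_modEq a r).of_dvd ⟨2, by omega⟩

theorem zval_mul (hr : r % 4 = 2) (x y : G r n) (i : Fin n) :
    zval r n (x * y) i = (zval r n x i + zval r n y (x.right.symm i)) % r := by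
  haveI : NeZero r := ⟨by omega⟩
  unfold zval
  rw [mul_left', toAdd_mul]
  exact ZMod.val_add _ _

theorem pmap_mul (hr : r % 4 = 2) (x y : G r n) :
    pmap r n (x * y) = pmap r n x * pmap r n y := by
  unfold pmap
  ext i
  · show ofAdd ((oslash r (zval r n (x * y) i) : ℕ) : ZMod (r / 2)) =
      ofAdd ((oslash r (zval r n x i) : ℕ) : ZMod (r / 2)) *
      ofAdd ((oslash r (zval r n y (x.right.symm i)) : ℕ) : ZMod (r / 2))
    rw [← ofAdd_add]
    congr 1
    apply mul2_inj hr
    have e : ∀ b : ℕ, (2 : ZMod (r / 2)) * ((oslash r b : ℕ) : ZMod (r / 2))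
        = ((2 * oslash r b : ℕ) : ZMod (r / 2)) := by intro b; push_cast; ring
    rw [mul_add, e, e, e, cast_two_oslash hr, cast_two_oslash hr, cast_two_oslash hr,
      zval_mul hr]
    rw [← Nat.cast_add, ZMod.natCast_eq_natCast_iff]
    exact (Nat.mod_modEq _ r).of_dvd ⟨2, by omega⟩
  · rfl

theorem pmap_one (hr : r % 4 = 2) : pmap r n 1 = 1 := by
  unfold pmap
  ext i
  · show ofAdd ((oslash r (zval r n 1 i) : ℕ) : ZMod (r / 2)) = 1
    have : zval r n 1 i = 0 := by
      unfold zval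
      show ((toAdd (1 : Multiplicative (ZMod r))).val) = 0
      simp [ZMod.val_zero]
    rw [this]
    norm_num [oslash]
  · rfl

theorem zval_mk (z : Fin n → Multiplicative (ZMod r)) (σ : Equiv.Perm (Fin n)) (i : Fin n) :
    zval r n ⟨z, σ⟩ i = (toAdd (z i)).val := rfl

theorem oslash_zero : oslash r 0 = 0 := by simp [oslash]

theorem gen_zero_eq (m k : ℕ) :
    gen m k 0 = ⟨fun j => if (j : ℕ) = 0 then ofAdd 1 else 1, 1⟩ := by
  unfold gen; rw [dif_neg (by omega)]

theorem gen_pos_eq (m k i : ℕ) (h1 : 0 < i) (h2 : i < k) :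
    gen m k i = ⟨1, Equiv.swap ⟨i - 1, by omega⟩ ⟨i, h2⟩⟩ := by
  unfold gen; rw [dif_pos ⟨h1, h2⟩]

theorem gen_zero_pow (m k c : ℕ) :
    gen m k 0 ^ c = ⟨fun j => if (j : ℕ) = 0 then ofAdd ((c : ℕ) : ZMod m) else 1, 1⟩ := by
  induction c with
  | zero =>
    ext j
    · show (1 : Multiplicative (ZMod m)) = if (j : ℕ) = 0 then ofAdd ((0 : ℕ) : ZMod m) else 1
      by_cases h : (j : ℕ) = 0 <;> simp [h]
    · rfl
  | succ c ih =>
    rw [pow_succ, ih, gen_zero_eq]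
    ext j
    · show (if (j : ℕ) = 0 then ofAdd ((c : ℕ) : ZMod m) else 1) *
        (if (j : ℕ) = 0 then ofAdd (1 : ZMod m) else 1) =
        (if (j : ℕ) = 0 then ofAdd (((c + 1 : ℕ)) : ZMod m) else 1)
      by_cases h : (j : ℕ) = 0
      · simp only [h, if_true, ← ofAdd_add]
        congr 1
        push_cast
        ring
      · simp [h]
    · rfl

theorem agen_zero_eq :
    agen r n 0 = ⟨fun j => if (j : ℕ) = 0 then ofAdd ((2 : ℕ) : ZMod r) else 1, 1⟩ := by
  unfold agen
  rw [if_pos rfl, gen_zero_pow]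

theorem agen_pos_eq (i : ℕ) (h1 : 0 < i) (h2 : i < n) :
    agen r n i = ⟨fun j => if (j : ℕ) = 0 then ofAdd ((r / 2 : ℕ) : ZMod r) else 1,
      Equiv.swap ⟨i - 1, by omega⟩ ⟨i, h2⟩⟩ := by
  unfold agen
  rw [if_neg (by omega), gen_zero_pow, gen_pos_eq _ _ _ h1 h2]
  ext j
  · show (if (j : ℕ) = 0 then ofAdd ((r / 2 : ℕ) : ZMod r) else 1) * 1 = _
    rw [mul_one]; rfl
  · rfl

theorem agen_one_inv_eq (hr : r % 4 = 2) (hn : 2 ≤ n) :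
    (agen r n 1)⁻¹ = ⟨fun j => if (j : ℕ) = 1 then ofAdd ((r / 2 : ℕ) : ZMod r) else 1,
      Equiv.swap ⟨0, by omega⟩ ⟨1, by omega⟩⟩ := by
  rw [agen_pos_eq 1 one_pos (by omega)]
  refine inv_eq_of_mul_eq_one_left ?_
  ext j
  · show (if (j : ℕ) = 1 then ofAdd ((r / 2 : ℕ) : ZMod r) else 1) *
      (if ((Equiv.swap (⟨0, by omega⟩ : Fin n) ⟨1, by omega⟩ j : Fin n) : ℕ) = 0
        then ofAdd ((r / 2 : ℕ) : ZMod r) else 1) = 1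
    by_cases h : j = (⟨1, by omega⟩ : Fin n)
    · subst h
      rw [if_pos rfl, Equiv.swap_apply_right, if_pos rfl, ← ofAdd_add, ← Nat.cast_add,
        show r / 2 + r / 2 = r by omega, ZMod.natCast_self]
      rfl
    · rw [if_neg (by simpa [Fin.ext_iff] using h), if_neg, mul_one]
      intro hc
      apply h
      have : Equiv.swap (⟨0, by omega⟩ : Fin n) ⟨1, by omega⟩ j = ⟨0, by omega⟩ :=
        Fin.ext (by simpa using hc)
      rw [Equiv.swap_apply_eq_iff, Equiv.swap_apply_left] at this
      exact this
  · show ((Equiv.swap _ _ (Equiv.swap _ _ j) : Fin n) : ℕ) = (j : ℕ)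
    rw [Equiv.swap_apply_self]

theorem pmap_inv (hr : r % 4 = 2) (x : G r n) : pmap r n x⁻¹ = (pmap r n x)⁻¹ := by
  refine (inv_eq_of_mul_eq_one_left ?_).symm
  rw [← pmap_mul hr, inv_mul_cancel, pmap_one hr]

theorem gen_sq (m i : ℕ) (h1 : 0 < i) (h2 : i < n) : gen m n i * gen m n i = 1 := by
  rw [gen_pos_eq _ _ _ h1 h2]
  ext j
  · show (1 : Multiplicative (ZMod m)) * 1 = 1
    rw [mul_one]
  · show ((Equiv.swap _ _ (Equiv.swap _ _ j) : Fin n) : ℕ) = (j : ℕ)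
    rw [Equiv.swap_apply_self]

theorem pmap_agen (hr : r % 4 = 2) (hn : 2 ≤ n) (i : ℕ) (hi : i < n) :
    pmap r n (agen r n i) = gen (r / 2) n i := by
  haveI : NeZero r := ⟨by omega⟩
  have e : ∀ b : ℕ, (2 : ZMod (r / 2)) * ((oslash r b : ℕ) : ZMod (r / 2))
      = ((2 * oslash r b : ℕ) : ZMod (r / 2)) := by intro b; push_cast; ring
  rcases Nat.eq_zero_or_pos i with h0 | hpos
  · subst h0
    rw [agen_zero_eq, gen_zero_eq]
    unfold pmap
    ext j
    · show ofAdd ((oslash r (zval r n _ j) : ℕ) : ZMod (r / 2)) =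
        (if (j : ℕ) = 0 then ofAdd (1 : ZMod (r / 2)) else 1)
      by_cases h : (j : ℕ) = 0
      · rw [if_pos h]
        congr 1
        apply mul2_inj hr
        have hz : zval r n (⟨fun j => if (j : ℕ) = 0 then ofAdd ((2 : ℕ) : ZMod r) else 1, 1⟩ : G r n) j
            = 2 % r := by
          rw [zval_mk, if_pos h]
          exact ZMod.val_natCast r 2
        rw [hz, cast_oslash_mod hr, e, cast_two_oslash hr]
        push_cast
        ring
      · rw [if_neg h]
        have hz : zval r n (⟨fun j => if (j : ℕ) = 0 then ofAdd ((2 : ℕ) : ZMod r) else 1, 1⟩ : G r n) j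
            = 0 := by
          rw [zval_mk, if_neg h]
          exact ZMod.val_zero
        rw [hz, oslash_zero]
        simp
    · rfl
  · rw [agen_pos_eq i hpos hi, gen_pos_eq _ _ _ hpos hi]
    unfold pmap
    ext j
    · show ofAdd ((oslash r (zval r n _ j) : ℕ) : ZMod (r / 2)) = (1 : Multiplicative (ZMod (r/2)))
      by_cases h : (j : ℕ) = 0
      · have hz : zval r n (⟨fun j => if (j : ℕ) = 0 then ofAdd ((r / 2 : ℕ) : ZMod r) else 1,
            Equiv.swap ⟨i - 1, by omega⟩ ⟨i, hi⟩⟩ : G r n) j = r / 2 := by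
          rw [zval_mk, if_pos h]
          show ((r / 2 : ℕ) : ZMod r).val = r / 2
          rw [ZMod.val_natCast]
          exact Nat.mod_eq_of_lt (by omega)
        rw [hz]
        have : oslash r (r / 2) = 0 := by
          unfold oslash
          rw [if_neg (by omega), show (r / 2 + r / 2) / 2 = r / 2 by omega, Nat.mod_self]
        rw [this]
        simp
      · have hz : zval r n (⟨fun j => if (j : ℕ) = 0 then ofAdd ((r / 2 : ℕ) : ZMod r) else 1,
            Equiv.swap ⟨i - 1, by omega⟩ ⟨i, hi⟩⟩ : G r n) j = 0 := by
          rw [zval_mk, if_neg h]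
          exact ZMod.val_zero
        rw [hz, oslash_zero]
        simp
    · rfl

theorem pmap_agen_one_inv (hr : r % 4 = 2) (hn : 2 ≤ n) :
    pmap r n ((agen r n 1)⁻¹) = gen (r / 2) n 1 := by
  rw [pmap_inv hr, pmap_agen hr hn 1 (by omega)]
  exact inv_eq_of_mul_eq_one_left (gen_sq (r / 2) 1 one_pos (by omega))

theorem pmap_mem_Sset (hr : r % 4 = 2) (hn : 2 ≤ n) {x : G r n} (hx : x ∈ Aset r n) :
    pmap r n x ∈ Sset (r / 2) n := by
  rcases hx with ⟨i, hi, rfl⟩ | hx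
  · exact ⟨i, by omega, pmap_agen hr hn i (by omega)⟩
  · rw [Set.mem_singleton_iff] at hx
    subst hx
    exact ⟨1, by omega, pmap_agen_one_inv hr hn⟩

theorem invPerm_eq_card (k : ℕ) (τ : Equiv.Perm (Fin k)) :
    invPerm k τ = (Finset.univ.filter
      (fun p : Fin k × Fin k => p.1 < p.2 ∧ τ p.2 < τ p.1)).card := by
  unfold invPerm
  rw [Nat.card_eq_fintype_card, Fintype.card_subtype]

theorem swap_adj_mono {k : ℕ} {a b : Fin k} (hab : (a : ℕ) + 1 = (b : ℕ))
    {u w : Fin k} (huw : u ≠ w) (h1 : ¬(u = a ∧ w = b)) (h2 : ¬(u = b ∧ w = a)) :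
    (Equiv.swap a b u < Equiv.swap a b w ↔ u < w) := by
  have val_ne : ∀ {x y : Fin k}, x ≠ y → (x : ℕ) ≠ (y : ℕ) := fun h hh => h (Fin.ext hh)
  rcases eq_or_ne u a with rfl | hua
  · have hwb : w ≠ b := fun h => h1 ⟨rfl, h⟩
    have hwa : w ≠ u := huw.symm
    rw [Equiv.swap_apply_left, Equiv.swap_apply_of_ne_of_ne hwa hwb]
    have := val_ne hwb; have := val_ne hwa
    simp only [Fin.lt_def]
    omega
  · rcases eq_or_ne u b with rfl | hub
    · have hwa : w ≠ a := fun h => h2 ⟨rfl, h⟩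
      have hwb : w ≠ u := huw.symm
      rw [Equiv.swap_apply_right, Equiv.swap_apply_of_ne_of_ne hwa hwb]
      have := val_ne hwb; have := val_ne hwa
      simp only [Fin.lt_def]
      omega
    · rw [Equiv.swap_apply_of_ne_of_ne hua hub]
      rcases eq_or_ne w a with rfl | hwa
      · rw [Equiv.swap_apply_left]
        have := val_ne hua; have := val_ne hub
        simp only [Fin.lt_def]
        omega
      · rcases eq_or_ne w b with rfl | hwb
        · rw [Equiv.swap_apply_right]
          have := val_ne hua; have := val_ne hub
          simp only [Fin.lt_def]
          omega
        · rw [Equiv.swap_apply_of_ne_of_ne hwa hwb]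

theorem invPerm_swap_step {k : ℕ} {a b : Fin k} (hab : (a : ℕ) + 1 = (b : ℕ))
    (τ : Equiv.Perm (Fin k)) :
    invPerm k (Equiv.swap a b * τ) = invPerm k τ + 1 ∨
    invPerm k τ = invPerm k (Equiv.swap a b * τ) + 1 := by
  classical
  set σ := Equiv.swap a b * τ with hσ
  have hab' : a ≠ b := fun h => by
    have : (a : ℕ) = (b : ℕ) := congrArg _ h
    omega
  have haltb : a < b := by simp only [Fin.lt_def]; omega
  have σapp : ∀ p : Fin k, σ p = Equiv.swap a b (τ p) := fun p => rfl
  set Fσ := Finset.univ.filter (fun p : Fin k × Fin k => p.1 < p.2 ∧ σ p.2 < σ p.1) with hFσ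
  set Fτ := Finset.univ.filter (fun p : Fin k × Fin k => p.1 < p.2 ∧ τ p.2 < τ p.1) with hFτ
  have hinj : τ⁻¹ a ≠ τ⁻¹ b := fun h => hab' (by
    have := congrArg τ h
    simpa using this)
  set q : Fin k × Fin k :=
    if τ⁻¹ a < τ⁻¹ b then (τ⁻¹ a, τ⁻¹ b) else (τ⁻¹ b, τ⁻¹ a) with hq
  have claimA : ∀ p : Fin k × Fin k, p ≠ q → (p ∈ Fσ ↔ p ∈ Fτ) := by
    intro p hpq
    simp only [hFσ, hFτ, Finset.mem_filter, Finset.mem_univ, true_and]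
    refine and_congr_right fun hplt => ?_
    have hne : τ p.2 ≠ τ p.1 := fun h => (ne_of_lt hplt) (τ.injective h).symm
    have h1 : ¬(τ p.2 = a ∧ τ p.1 = b) := by
      rintro ⟨ha2, hb1⟩
      apply hpq
      have e2 : p.2 = τ⁻¹ a := by rw [← ha2]; simp
      have e1 : p.1 = τ⁻¹ b := by rw [← hb1]; simp
      have hcond : ¬ τ⁻¹ a < τ⁻¹ b := by
        rw [← e2, ← e1]
        exact fun h => absurd hplt (not_lt.mpr (le_of_lt h))
      rw [hq, if_neg hcond]
      exact Prod.ext e1 e2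
    have h2 : ¬(τ p.2 = b ∧ τ p.1 = a) := by
      rintro ⟨hb2, ha1⟩
      apply hpq
      have e2 : p.2 = τ⁻¹ b := by rw [← hb2]; simp
      have e1 : p.1 = τ⁻¹ a := by rw [← ha1]; simp
      have hcond : τ⁻¹ a < τ⁻¹ b := by rw [← e2, ← e1]; exact hplt
      rw [hq, if_pos hcond]
      exact Prod.ext e1 e2
    rw [σapp, σapp]
    exact swap_adj_mono hab hne h1 h2
  have happ1 : τ (τ⁻¹ a) = a := by simp
  have happ2 : τ (τ⁻¹ b) = b := by simp
  by_cases hc : τ⁻¹ a < τ⁻¹ b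
  · have hqdef : q = (τ⁻¹ a, τ⁻¹ b) := by rw [hq, if_pos hc]
    have hqFτ : q ∉ Fτ := by
      simp only [hFτ, Finset.mem_filter, Finset.mem_univ, true_and, hqdef]
      rintro ⟨-, hlt⟩
      rw [happ1, happ2] at hlt
      exact absurd haltb (not_lt.mpr (le_of_lt hlt))
    have hqFσ : q ∈ Fσ := by
      simp only [hFσ, Finset.mem_filter, Finset.mem_univ, true_and, hqdef]
      refine ⟨hc, ?_⟩
      rw [σapp, σapp, happ1, happ2, Equiv.swap_apply_left, Equiv.swap_apply_right]
      exact haltb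
    have hset : Fσ = insert q Fτ := by
      ext p
      rw [Finset.mem_insert]
      rcases eq_or_ne p q with rfl | hpq
      · simp [hqFσ]
      · rw [claimA p hpq]
        simp [hpq]
    left
    rw [invPerm_eq_card, invPerm_eq_card, ← hFσ, ← hFτ, hset,
      Finset.card_insert_of_notMem hqFτ]
  · have hc' : τ⁻¹ b < τ⁻¹ a := lt_of_le_of_ne (not_lt.mp hc) (Ne.symm hinj)
    have hqdef : q = (τ⁻¹ b, τ⁻¹ a) := by rw [hq, if_neg hc]
    have hqFτ : q ∈ Fτ := by
      simp only [hFτ, Finset.mem_filter, Finset.mem_univ, true_and, hqdef]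
      refine ⟨hc', ?_⟩
      rw [happ1, happ2]
      exact haltb
    have hqFσ : q ∉ Fσ := by
      simp only [hFσ, Finset.mem_filter, Finset.mem_univ, true_and, hqdef]
      rintro ⟨-, hlt⟩
      rw [σapp, σapp, happ1, happ2, Equiv.swap_apply_left, Equiv.swap_apply_right] at hlt
      exact absurd haltb (not_lt.mpr (le_of_lt hlt))
    have hset : Fτ = insert q Fσ := by
      ext p
      rw [Finset.mem_insert]
      rcases eq_or_ne p q with rfl | hpq
      · simp [hqFτ]
      · rw [← claimA p hpq]
        simp [hpq]
    right
    rw [invPerm_eq_card, invPerm_eq_card, ← hFσ, ← hFτ, hset,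
      Finset.card_insert_of_notMem hqFσ]

theorem invPerm_swap_parity {k : ℕ} {a b : Fin k} (hab : (a : ℕ) + 1 = (b : ℕ))
    (τ : Equiv.Perm (Fin k)) :
    invPerm k (Equiv.swap a b * τ) % 2 = 1 - invPerm k τ % 2 := by
  rcases invPerm_swap_step hab τ with h | h <;> omega

theorem invPerm_one (k : ℕ) : invPerm k 1 = 0 := by
  rw [invPerm_eq_card, Finset.card_eq_zero, Finset.filter_eq_empty_iff]
  rintro p - ⟨h1, h2⟩
  exact absurd h2 (not_lt.mpr (le_of_lt h1))

theorem smap_one (hr : r % 4 = 2) (hn : 2 ≤ n) : smap r n (1 : G (r / 2) n) = 1 := by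
  haveI : NeZero (r / 2) := ⟨by omega⟩
  unfold smap
  ext d
  · show ofAdd (((2 * zval (r / 2) n 1 d +
        if (d : ℕ) = 0 ∧ invPerm n (1 : G (r / 2) n).right % 2 = 1 then r / 2 else 0 : ℕ) :
          ZMod r)) = 1
    have h1 : (1 : G (r / 2) n).right = 1 := rfl
    have hz : zval (r / 2) n 1 d = 0 := ZMod.val_zero
    rw [h1, invPerm_one, hz]
    norm_num
  · rfl

theorem half_half (hr : r % 4 = 2) :
    ((r / 2 : ℕ) : ZMod r) + ((r / 2 : ℕ) : ZMod r) = 0 := by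
  rw [← Nat.cast_add, show r / 2 + r / 2 = r by omega, ZMod.natCast_self]

theorem D_add (hr : r % 4 = 2) (c c' : ZMod (r / 2)) :
    ((2 * (c + c').val : ℕ) : ZMod r) =
      ((2 * c.val : ℕ) : ZMod r) + ((2 * c'.val : ℕ) : ZMod r) := by
  haveI : NeZero (r / 2) := ⟨by omega⟩
  rw [ZMod.val_add, ← Nat.cast_add, ZMod.natCast_eq_natCast_iff]
  have h := Nat.ModEq.mul_left' (c := 2) (Nat.mod_modEq (c.val + c'.val) (r / 2))
  rw [show 2 * (r / 2) = r by omega] at h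
  calc 2 * ((c.val + c'.val) % (r / 2)) ≡ 2 * (c.val + c'.val) [MOD r] := h
    _ = 2 * c.val + 2 * c'.val := by ring
    _ ≡ _ [MOD r] := Nat.ModEq.refl _

theorem D_one (hr : r % 4 = 2) :
    ((2 * (1 : ZMod (r / 2)).val : ℕ) : ZMod r) = ((2 : ℕ) : ZMod r) := by
  by_cases h2 : r = 2
  · subst h2
    decide
  · haveI := Fact.mk (show 1 < r / 2 by omega)
    rw [ZMod.val_one]

theorem smap_gen_zero_mul (hr : r % 4 = 2) (hn : 2 ≤ n) (τ : G (r / 2) n) :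
    smap r n (gen (r / 2) n 0 * τ) = agen r n 0 * smap r n τ := by
  haveI : NeZero r := ⟨by omega⟩
  haveI : NeZero (r / 2) := ⟨by omega⟩
  have hright : (gen (r / 2) n 0 * τ).right = τ.right := by
    rw [mul_right', gen_zero_eq]
    show 1 * τ.right = τ.right
    rw [one_mul]
  ext d
  · show ofAdd (((2 * zval (r / 2) n (gen (r / 2) n 0 * τ) d +
        if (d : ℕ) = 0 ∧ invPerm n (gen (r / 2) n 0 * τ).right % 2 = 1 then r / 2 else 0 : ℕ) :
          ZMod r))
      = (agen r n 0).left d *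
        ofAdd (((2 * zval (r / 2) n τ ((agen r n 0).right.symm d) +
          if (((agen r n 0).right.symm d : Fin n) : ℕ) = 0 ∧ invPerm n τ.right % 2 = 1
            then r / 2 else 0 : ℕ) : ZMod r))
    rw [hright, agen_zero_eq]
    show _ = (if (d : ℕ) = 0 then ofAdd ((2 : ℕ) : ZMod r) else 1) *
      ofAdd (((2 * zval (r / 2) n τ d +
        if (d : ℕ) = 0 ∧ invPerm n τ.right % 2 = 1 then r / 2 else 0 : ℕ) : ZMod r))
    by_cases hd : (d : ℕ) = 0
    · rw [if_pos hd, ← ofAdd_add]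
      congr 1
      have hzv : zval (r / 2) n (gen (r / 2) n 0 * τ) d
          = ((1 : ZMod (r / 2)) + toAdd (τ.left d)).val := by
        unfold zval
        rw [mul_left', gen_zero_eq]
        show (toAdd ((if (d : ℕ) = 0 then ofAdd (1 : ZMod (r / 2)) else 1) * τ.left d)).val = _
        rw [if_pos hd, toAdd_mul, toAdd_ofAdd]
      rw [hzv, Nat.cast_add, Nat.cast_add, D_add hr 1 (toAdd (τ.left d)), D_one hr]
      unfold zval
      push_cast
      ring
    · rw [if_neg hd, one_mul]
      congr 2
      have hzv : zval (r / 2) n (gen (r / 2) n 0 * τ) d = zval (r / 2) n τ d := by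
        unfold zval
        rw [mul_left', gen_zero_eq]
        show (toAdd ((if (d : ℕ) = 0 then ofAdd (1 : ZMod (r / 2)) else 1) * τ.left d)).val = _
        rw [if_neg hd, one_mul]
      rw [hzv]
  · rfl

theorem zval_swap_mul (m i : ℕ) (h1 : 0 < i) (h2 : i < n) (τ : G m n) (d : Fin n) :
    zval m n (gen m n i * τ) d
      = zval m n τ (Equiv.swap (⟨i - 1, by omega⟩ : Fin n) ⟨i, h2⟩ d) := by
  unfold zval
  rw [mul_left', gen_pos_eq _ _ _ h1 h2]
  show (toAdd ((1 : Multiplicative (ZMod m)) *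
    τ.left ((Equiv.swap (⟨i - 1, by omega⟩ : Fin n) ⟨i, h2⟩).symm d))).val = _
  rw [one_mul, Equiv.symm_swap]

theorem right_swap_mul (m i : ℕ) (h1 : 0 < i) (h2 : i < n) (τ : G m n) :
    (gen m n i * τ).right = Equiv.swap (⟨i - 1, by omega⟩ : Fin n) ⟨i, h2⟩ * τ.right := by
  rw [mul_right', gen_pos_eq _ _ _ h1 h2]

theorem invPerm_gen_mul (m i : ℕ) (h1 : 0 < i) (h2 : i < n) (τ : G m n) :
    invPerm n (gen m n i * τ).right % 2 = 1 - invPerm n τ.right % 2 := by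
  rw [right_swap_mul m i h1 h2]
  exact invPerm_swap_parity (by show i - 1 + 1 = i; omega) τ.right

theorem smap_gen_ge2_mul (hr : r % 4 = 2) (hn : 2 ≤ n) (i : ℕ) (h2i : 2 ≤ i) (hi : i < n)
    (τ : G (r / 2) n) :
    smap r n (gen (r / 2) n i * τ) = agen r n i * smap r n τ := by
  have hpar := invPerm_gen_mul (r / 2) i (by omega) hi τ
  have hsw0 : ∀ d : Fin n, (d : ℕ) = 0 →
      Equiv.swap (⟨i - 1, by omega⟩ : Fin n) ⟨i, hi⟩ d = d := by
    intro d hd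
    apply Equiv.swap_apply_of_ne_of_ne
    · exact fun h => by have := congrArg Fin.val h; simp at this; omega
    · exact fun h => by have := congrArg Fin.val h; simp at this; omega
  have hsw0' : ∀ d : Fin n, (d : ℕ) ≠ 0 →
      ((Equiv.swap (⟨i - 1, by omega⟩ : Fin n) ⟨i, hi⟩ d : Fin n) : ℕ) ≠ 0 := by
    intro d hd hc
    have h0 : Equiv.swap (⟨i - 1, by omega⟩ : Fin n) ⟨i, hi⟩ d = ⟨0, by omega⟩ :=
      Fin.ext hc
    rw [Equiv.swap_apply_eq_iff] at h0
    rw [hsw0 _ rfl] at h0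
    exact hd (congrArg Fin.val h0)
  ext d
  · rw [agen_pos_eq i (by omega) hi]
    show ofAdd (((2 * zval (r / 2) n (gen (r / 2) n i * τ) d +
        if (d : ℕ) = 0 ∧ invPerm n (gen (r / 2) n i * τ).right % 2 = 1
          then r / 2 else 0 : ℕ) : ZMod r))
      = (if (d : ℕ) = 0 then ofAdd ((r / 2 : ℕ) : ZMod r) else 1) *
        ofAdd (((2 * zval (r / 2) n τ (Equiv.swap (⟨i - 1, by omega⟩ : Fin n) ⟨i, hi⟩ d) +
          if ((Equiv.swap (⟨i - 1, by omega⟩ : Fin n) ⟨i, hi⟩ d : Fin n) : ℕ) = 0 ∧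
            invPerm n τ.right % 2 = 1 then r / 2 else 0 : ℕ) : ZMod r))
    rw [zval_swap_mul (r / 2) i (by omega) hi]
    by_cases hd : (d : ℕ) = 0
    · rw [if_pos hd, hsw0 d hd]
      rcases Nat.mod_two_eq_zero_or_one (invPerm n τ.right) with hb | hb
      · rw [if_pos (⟨hd, by omega⟩ : _ ∧ _), if_neg (fun hc => by
          have := hc.2; omega), ← ofAdd_add]
        congr 1
        push_cast
        ring
      · rw [if_neg (fun hc => by have := hc.2; omega), if_pos (⟨hd, hb⟩ : _ ∧ _),
          ← ofAdd_add]
        congr 1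
        push_cast
        linear_combination -half_half hr
    · rw [if_neg hd, one_mul, if_neg (fun hc => hd hc.1),
        if_neg (fun hc => hsw0' d hd hc.1)]
  · rw [agen_pos_eq i (by omega) hi]
    show (((gen (r / 2) n i * τ).right) d : ℕ)
      = (((Equiv.swap (⟨i - 1, by omega⟩ : Fin n) ⟨i, hi⟩) * τ.right) d : ℕ)
    rw [right_swap_mul (r / 2) i (by omega) hi]

theorem smap_gen_one_mul_even (hr : r % 4 = 2) (hn : 2 ≤ n) (τ : G (r / 2) n)
    (hb : invPerm n τ.right % 2 = 0) :
    smap r n (gen (r / 2) n 1 * τ) = agen r n 1 * smap r n τ := by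
  have hpar := invPerm_gen_mul (r / 2) 1 one_pos (by omega) τ
  ext d
  · rw [agen_pos_eq 1 one_pos (by omega)]
    show ofAdd (((2 * zval (r / 2) n (gen (r / 2) n 1 * τ) d +
        if (d : ℕ) = 0 ∧ invPerm n (gen (r / 2) n 1 * τ).right % 2 = 1
          then r / 2 else 0 : ℕ) : ZMod r))
      = (if (d : ℕ) = 0 then ofAdd ((r / 2 : ℕ) : ZMod r) else 1) *
        ofAdd (((2 * zval (r / 2) n τ (Equiv.swap (⟨1 - 1, by omega⟩ : Fin n) ⟨1, by omega⟩ d) +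
          if ((Equiv.swap (⟨1 - 1, by omega⟩ : Fin n) ⟨1, by omega⟩ d : Fin n) : ℕ) = 0 ∧
            invPerm n τ.right % 2 = 1 then r / 2 else 0 : ℕ) : ZMod r))
    rw [zval_swap_mul (r / 2) 1 one_pos (by omega)]
    by_cases hd0 : (d : ℕ) = 0
    · rw [show d = (⟨1 - 1, by omega⟩ : Fin n) from Fin.ext hd0, Equiv.swap_apply_left,
        if_pos (⟨rfl, by omega⟩ : _ ∧ _), if_pos rfl,
        if_neg (fun hc => Nat.one_ne_zero hc.1), ← ofAdd_add]
      congr 1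
      push_cast
      ring
    · by_cases hd1 : (d : ℕ) = 1
      · rw [show d = (⟨1, by omega⟩ : Fin n) from Fin.ext hd1, Equiv.swap_apply_right,
          if_neg (fun hc => Nat.one_ne_zero hc.1),
          if_neg (fun hc => Nat.one_ne_zero hc), one_mul,
          if_neg (fun hc => by have := hc.2; omega)]
      · have hne : Equiv.swap (⟨1 - 1, by omega⟩ : Fin n) ⟨1, by omega⟩ d = d := by
          apply Equiv.swap_apply_of_ne_of_ne
          · exact fun h => hd0 (congrArg Fin.val h)
          · exact fun h => hd1 (congrArg Fin.val h)
        rw [hne, if_neg (fun hc => hd0 hc.1), if_neg hd0, one_mul,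
          if_neg (fun hc => hd0 hc.1)]
  · rw [agen_pos_eq 1 one_pos (by omega)]
    show (((gen (r / 2) n 1 * τ).right) d : ℕ)
      = (((Equiv.swap (⟨1 - 1, by omega⟩ : Fin n) ⟨1, by omega⟩) * τ.right) d : ℕ)
    rw [right_swap_mul (r / 2) 1 one_pos (by omega)]

theorem smap_gen_one_mul_odd (hr : r % 4 = 2) (hn : 2 ≤ n) (τ : G (r / 2) n)
    (hb : invPerm n τ.right % 2 = 1) :
    smap r n (gen (r / 2) n 1 * τ) = (agen r n 1)⁻¹ * smap r n τ := by
  have hpar := invPerm_gen_mul (r / 2) 1 one_pos (by omega) τ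
  ext d
  · rw [agen_one_inv_eq hr hn]
    show ofAdd (((2 * zval (r / 2) n (gen (r / 2) n 1 * τ) d +
        if (d : ℕ) = 0 ∧ invPerm n (gen (r / 2) n 1 * τ).right % 2 = 1
          then r / 2 else 0 : ℕ) : ZMod r))
      = (if (d : ℕ) = 1 then ofAdd ((r / 2 : ℕ) : ZMod r) else 1) *
        ofAdd (((2 * zval (r / 2) n τ (Equiv.swap (⟨0, by omega⟩ : Fin n) ⟨1, by omega⟩ d) +
          if ((Equiv.swap (⟨0, by omega⟩ : Fin n) ⟨1, by omega⟩ d : Fin n) : ℕ) = 0 ∧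
            invPerm n τ.right % 2 = 1 then r / 2 else 0 : ℕ) : ZMod r))
    rw [zval_swap_mul (r / 2) 1 one_pos (by omega)]
    by_cases hd0 : (d : ℕ) = 0
    · rw [show d = (⟨0, by omega⟩ : Fin n) from Fin.ext hd0, Equiv.swap_apply_left,
        if_neg (fun hc => by have := hc.2; omega),
        if_neg (fun hc => Nat.zero_ne_one hc), one_mul,
        if_neg (fun hc => Nat.one_ne_zero hc.1)]
    · by_cases hd1 : (d : ℕ) = 1
      · rw [show d = (⟨1, by omega⟩ : Fin n) from Fin.ext hd1, Equiv.swap_apply_right,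
          if_neg (fun hc => Nat.one_ne_zero hc.1), if_pos rfl,
          if_pos (⟨rfl, hb⟩ : _ ∧ _), ← ofAdd_add]
        congr 1
        push_cast
        linear_combination -half_half hr
      · have hne : Equiv.swap (⟨0, by omega⟩ : Fin n) ⟨1, by omega⟩ d = d := by
          apply Equiv.swap_apply_of_ne_of_ne
          · exact fun h => hd0 (congrArg Fin.val h)
          · exact fun h => hd1 (congrArg Fin.val h)
        rw [hne, if_neg (fun hc => hd0 hc.1), if_neg hd1, one_mul,
          if_neg (fun hc => hd0 hc.1)]
  · rw [agen_one_inv_eq hr hn]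
    show (((gen (r / 2) n 1 * τ).right) d : ℕ)
      = (((Equiv.swap (⟨0, by omega⟩ : Fin n) ⟨1, by omega⟩) * τ.right) d : ℕ)
    rw [right_swap_mul (r / 2) 1 one_pos (by omega)]

theorem smap_gen_mul (hr : r % 4 = 2) (hn : 2 ≤ n) (i : ℕ) (hi : i < n) (τ : G (r / 2) n) :
    ∃ a ∈ Aset r n, smap r n (gen (r / 2) n i * τ) = a * smap r n τ := by
  rcases Nat.eq_zero_or_pos i with rfl | hpos
  · exact ⟨agen r n 0, Or.inl ⟨0, by omega, rfl⟩, smap_gen_zero_mul hr hn τ⟩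
  · by_cases h1 : i = 1
    · subst h1
      rcases Nat.mod_two_eq_zero_or_one (invPerm n τ.right) with hb | hb
      · exact ⟨agen r n 1, Or.inl ⟨1, by omega, rfl⟩, smap_gen_one_mul_even hr hn τ hb⟩
      · exact ⟨(agen r n 1)⁻¹, Or.inr rfl, smap_gen_one_mul_odd hr hn τ hb⟩
    · exact ⟨agen r n i, Or.inl ⟨i, by omega, rfl⟩,
        smap_gen_ge2_mul hr hn i (by omega) hi τ⟩

theorem lift_word (hr : r % 4 = 2) (hn : 2 ≤ n) :
    ∀ w : List (G (r / 2) n), (∀ x ∈ w, x ∈ Sset (r / 2) n) →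
    ∃ w' : List (G r n), (∀ x ∈ w', x ∈ Aset r n) ∧
      w'.prod = smap r n w.prod ∧ w'.length = w.length := by
  intro w
  induction w with
  | nil =>
    intro _
    exact ⟨[], by simp, by simp [smap_one hr hn], rfl⟩
  | cons x t ih =>
    intro hmem
    obtain ⟨w'', h1, h2, h3⟩ := ih (fun y hy => hmem y (List.mem_cons_of_mem x hy))
    obtain ⟨i, hi, hx⟩ := hmem x List.mem_cons_self
    obtain ⟨a, ha, haeq⟩ := smap_gen_mul hr hn i hi t.prod
    refine ⟨a :: w'', ?_, ?_, ?_⟩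
    · intro y hy
      rcases List.mem_cons.mp hy with rfl | hy
      · exact ha
      · exact h1 y hy
    · rw [List.prod_cons, List.prod_cons, hx, haeq, h2]
    · simp [h3]

theorem pmap_list (hr : r % 4 = 2) (w : List (G r n)) :
    (w.map (pmap r n)).prod = pmap r n w.prod := by
  induction w with
  | nil => simp [pmap_one hr]
  | cons x t ih => simp [List.prod_cons, pmap_mul hr, ih]

theorem pmap_smap (hr : r % 4 = 2) (hn : 2 ≤ n) (τ : G (r / 2) n) :
    pmap r n (smap r n τ) = τ := by
  haveI : NeZero r := ⟨by omega⟩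
  haveI : NeZero (r / 2) := ⟨by omega⟩
  unfold pmap
  ext d
  · show ofAdd ((oslash r (zval r n (smap r n τ) d) : ℕ) : ZMod (r / 2)) = τ.left d
    rw [← ofAdd_toAdd (τ.left d)]
    congr 1
    apply mul2_inj hr
    have e : ∀ b : ℕ, (2 : ZMod (r / 2)) * ((oslash r b : ℕ) : ZMod (r / 2))
        = ((2 * oslash r b : ℕ) : ZMod (r / 2)) := by intro b; push_cast; ring
    have hz : zval r n (smap r n τ) d = (2 * zval (r / 2) n τ d +
        if (d : ℕ) = 0 ∧ invPerm n τ.right % 2 = 1 then r / 2 else 0) % r := by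
      unfold zval smap
      exact ZMod.val_natCast r _
    rw [hz, cast_oslash_mod hr, e, cast_two_oslash hr]
    by_cases hc : (d : ℕ) = 0 ∧ invPerm n τ.right % 2 = 1
    · rw [if_pos hc]
      push_cast
      rw [ZMod.natCast_self]
      unfold zval
      rw [ZMod.natCast_val, ZMod.cast_id]
      ring
    · rw [if_neg hc]
      push_cast
      unfold zval
      rw [ZMod.natCast_val, ZMod.cast_id]
      ring
  · rfl

theorem wordLength_eq (hr : r % 4 = 2) (hn : 2 ≤ n) (τ : G (r / 2) n) :
    wordLength (Aset r n) (smap r n τ) = wordLength (Sset (r / 2) n) τ := by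
  unfold wordLength
  congr 1
  ext k
  simp only [Set.mem_setOf_eq]
  constructor
  · rintro ⟨w, hw, hprod, hlen⟩
    refine ⟨w.map (pmap r n), ?_, ?_, by simp [hlen]⟩
    · intro x hx
      obtain ⟨y, hy, rfl⟩ := List.mem_map.mp hx
      exact pmap_mem_Sset hr hn (hw y hy)
    · rw [pmap_list hr, hprod, pmap_smap hr hn]
  · rintro ⟨w, hw, hprod, hlen⟩
    obtain ⟨w', h1, h2, h3⟩ := lift_word hr hn w hw
    exact ⟨w', h1, by rw [h2, hprod], by rw [h3, hlen]⟩

end Aux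

end ACP

/-- `ℓ_𝒜(π) = ℓ_F(π) + ℓ_G(p(π))`. -/
theorem length_decomposition (r n : ℕ) (hn : 2 ≤ n) (hr : r % 4 = 2)
    (π : ACP.G r n) (hπ : π ∈ ACP.Arn r n (by omega)) :
    (ACP.wordLength (ACP.Aset r n) π : ℤ) =
      ((ACP.wordLength (ACP.Aset r n) π : ℤ) -
        (ACP.wordLength (ACP.Aset r n) (ACP.smap r n (ACP.pmap r n π)) : ℤ)) +
      (ACP.wordLength (ACP.Sset (r / 2) n) (ACP.pmap r n π) : ℤ) := by
  have key := ACP.wordLength_eq (r := r) (n := n) hr hn (ACP.pmap r n π)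
  rw [key]
  ring
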